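/- Let p ≥ 3 be prime, 0 < x < p, k ≥ 1 and define S_k(x, p^r) = Σ 1/i^k over integers 0 < i < p^r with i ≡ x (mod p). Then for every r ≥ 2, S_k(x, p^r) ≡ 0 (mod p^{r-1}), i.e. S_k(x,p^r)/p^{r-1} is p-integral. -/

import Mathlib

/-- `S p k x R = ∑_{0 < i < R, i ≡ x (mod p)} 1/i^k`. -/
def S (p k x R : ℕ) : ℚ :=
  ∑ i ∈ (Finset.Ioo 0 R).filter (fun i => i % p = x % p), (1 : ℚ) / (i : ℚ)^k

private lemma sum_range_mul' {M : Type*} [AddCommMonoid M] (f : ℕ → M) (a b : ℕ) :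
    ∑ i ∈ Finset.range (b * a), f i
      = ∑ t ∈ Finset.range b, ∑ j ∈ Finset.range a, f (t * a + j) := by
  induction b with
  | zero => simp
  | succ b ih => rw [Nat.succ_mul, Finset.sum_range_add, ih, Finset.sum_range_succ]

private lemma inv_cast_zmod {n m : ℕ} (h : m ∣ n) (a : ZMod n) (ha : IsUnit a) :
    (ZMod.castHom h (ZMod m)) a⁻¹ = ((ZMod.castHom h (ZMod m)) a)⁻¹ := by
  have h1 : (ZMod.castHom h (ZMod m)) a * (ZMod.castHom h (ZMod m)) a⁻¹ = 1 := by
    rw [← map_mul, ZMod.mul_inv_of_unit a ha, map_one]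
  have h2 : (ZMod.castHom h (ZMod m)) a * ((ZMod.castHom h (ZMod m)) a)⁻¹ = 1 :=
    ZMod.mul_inv_of_unit _ (ha.map _)
  exact (ha.map (ZMod.castHom h (ZMod m))).mul_left_cancel (h1.trans h2.symm)

private lemma coprime_aux {p x : ℕ} (hp : p.Prime) (hpx : ¬ p ∣ x) (j n : ℕ) :
    Nat.Coprime (x + p * j) (p ^ n) := by
  refine Nat.Coprime.pow_right _ (Nat.Coprime.symm (hp.coprime_iff_not_dvd.mpr ?_))
  intro hdvd
  exact hpx ((Nat.dvd_add_right (Dvd.intro j rfl)).mp (by rwa [Nat.add_comm] at hdvd))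

private lemma core (p x k : ℕ) (hp : p.Prime) (hpx : ¬ p ∣ x) :
    ∀ m : ℕ, ∑ j ∈ Finset.range (p ^ m),
      (((x + p * j : ℕ) : ZMod (p ^ m)))⁻¹ ^ k = 0 := by
  intro m
  induction m with
  | zero =>
    haveI : Subsingleton (ZMod (p ^ 0)) := by rw [pow_zero]; infer_instance
    exact Subsingleton.elim _ _
  | succ m ih =>
    haveI : NeZero (p ^ (m+1)) := ⟨pow_ne_zero _ hp.pos.ne'⟩
    haveI : NeZero (p ^ m) := ⟨pow_ne_zero _ hp.pos.ne'⟩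
    have hdvd : p ^ m ∣ p ^ (m+1) := pow_dvd_pow p (Nat.le_succ m)
    -- rewrite the sum over range (p^(m+1)) as a double sum
    have hrange : Finset.range (p ^ (m+1)) = Finset.range (p * p ^ m) := by rw [pow_succ']
    rw [hrange]
    rw [sum_range_mul' (fun i => (((x + p * i : ℕ) : ZMod (p ^ (m+1))))⁻¹ ^ k) (p ^ m) p]
    have hterm : ∀ t ∈ Finset.range p, ∀ j ∈ Finset.range (p ^ m),
        (((x + p * (t * p ^ m + j) : ℕ) : ZMod (p ^ (m+1))))⁻¹ ^ k
          = (((x + p * j : ℕ) : ZMod (p ^ (m+1))))⁻¹ ^ k := by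
      intro t _ j _
      congr 2
      push_cast
      have h0 : (p : ZMod (p^(m+1))) * (p : ZMod (p^(m+1))) ^ m = 0 := by
        rw [← pow_succ', ← Nat.cast_pow, ZMod.natCast_self]
      ring_nf
      rw [h0]
      ring
    rw [Finset.sum_congr rfl (fun t ht => Finset.sum_congr rfl (hterm t ht))]
    rw [Finset.sum_const, Finset.card_range]
    set Y : ZMod (p ^ (m+1)) :=
      ∑ j ∈ Finset.range (p ^ m), (((x + p * j : ℕ) : ZMod (p ^ (m+1))))⁻¹ ^ k with hY
    -- the cast of Y to ZMod (p^m) is 0 by ih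
    have hcast : (ZMod.castHom hdvd (ZMod (p ^ m))) Y = 0 := by
      rw [hY, map_sum]
      rw [← ih]
      refine Finset.sum_congr rfl (fun j _ => ?_)
      rw [map_pow, inv_cast_zmod hdvd _ ?_, map_natCast]
      rw [ZMod.isUnit_iff_coprime]
      exact coprime_aux hp hpx j (m+1)
    -- hence p^m ∣ Y.val
    have hval : p ^ m ∣ Y.val := by
      have : ((Y.val : ℕ) : ZMod (p ^ m)) = 0 := by
        rw [ZMod.natCast_val, ← ZMod.castHom_apply (h := hdvd)]
        exact hcast
      exact (ZMod.natCast_eq_zero_iff _ _).mp this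
    -- so p • Y = 0
    have : (p : ℕ) • Y = ((p * Y.val : ℕ) : ZMod (p ^ (m+1))) := by
      rw [Nat.cast_mul, ZMod.natCast_zmod_val, nsmul_eq_mul]
    rw [this, ZMod.natCast_eq_zero_iff]
    exact Dvd.dvd.trans (dvd_of_eq (pow_succ' p m)) (Nat.mul_dvd_mul_left p hval)

theorem stmt9 (p x k : ℕ) (hp : p.Prime) (hp3 : 3 ≤ p) (hx : 0 < x) (hxp : x < p)
    (hk : 1 ≤ k) (r : ℕ) (hr : 2 ≤ r) :
    (p : ℤ)^(r-1) ∣ (S p k x (p^r)).num := by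
  have hpx : ¬ p ∣ x := Nat.not_dvd_of_pos_of_lt hx hxp
  set m := r - 1 with hm
  have hrm : r = m + 1 := by omega
  haveI : NeZero (p ^ m) := ⟨pow_ne_zero _ hp.pos.ne'⟩
  -- reindex S as a sum over range (p^m)
  have hreindex : S p k x (p ^ r)
      = ∑ j ∈ Finset.range (p ^ m), (1 : ℚ) / ((x + p * j : ℕ) : ℚ) ^ k := by
    rw [S]
    refine Finset.sum_nbij' (fun i => i / p) (fun j => x + p * j) ?_ ?_ ?_ ?_ ?_
    · intro i hi
      simp only [Finset.mem_filter, Finset.mem_Ioo] at hi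
      obtain ⟨⟨_, hilt⟩, himod⟩ := hi
      rw [Finset.mem_range]
      rw [hrm, pow_succ'] at hilt
      exact Nat.div_lt_of_lt_mul (by omega)
    · intro j hj
      rw [Finset.mem_range] at hj
      simp only [Finset.mem_filter, Finset.mem_Ioo]
      refine ⟨⟨by omega, ?_⟩, ?_⟩
      · rw [hrm, pow_succ']
        calc x + p * j < p + p * j := by omega
        _ = p * (j + 1) := by ring
        _ ≤ p * p ^ m := Nat.mul_le_mul_left p (by omega)
      · rw [Nat.add_mul_mod_self_left]
    · intro i hi
      simp only [Finset.mem_filter, Finset.mem_Ioo] at hi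
      obtain ⟨⟨_, _⟩, himod⟩ := hi
      rw [Nat.mod_eq_of_lt hxp] at himod
      show x + p * (i / p) = i
      conv_rhs => rw [← Nat.div_add_mod i p]
      omega
    · intro j hj
      show (x + p * j) / p = j
      rw [Nat.add_mul_div_left _ _ hp.pos, Nat.div_eq_of_lt hxp, Nat.zero_add]
    · intro i hi
      simp only [Finset.mem_filter, Finset.mem_Ioo] at hi
      obtain ⟨⟨_, _⟩, himod⟩ := hi
      rw [Nat.mod_eq_of_lt hxp] at himod
      have hxi : x + p * (i / p) = i := by
        conv_rhs => rw [← Nat.div_add_mod i p]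
        omega
      show (1 : ℚ) / (i : ℚ) ^ k = (1 : ℚ) / ((x + p * (i / p) : ℕ) : ℚ) ^ k
      rw [hxi]
  -- set up integers N and D
  set a : ℕ → ℕ := fun j => (x + p * j) ^ k with ha
  have hapos : ∀ j, 0 < a j := fun j => pow_pos (by omega) k
  set s := Finset.range (p ^ m) with hs
  set D : ℕ := ∏ j ∈ s, a j with hD
  set N : ℕ := ∑ j ∈ s, ∏ j' ∈ s.erase j, a j' with hN
  have hSa : S p k x (p ^ r) = ∑ j ∈ s, (1 : ℚ) / ((a j : ℕ) : ℚ) := by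
    rw [hreindex]; refine Finset.sum_congr rfl (fun j _ => ?_); rw [ha]; push_cast; ring
  have hkey : S p k x (p ^ r) * (D : ℚ) = (N : ℚ) := by
    rw [hSa, hN, Finset.sum_mul]
    push_cast
    refine Finset.sum_congr rfl (fun j hj => ?_)
    rw [hD]
    push_cast
    rw [← Finset.mul_prod_erase s (fun j' => ((a j' : ℕ) : ℚ)) hj]
    have : ((a j : ℕ) : ℚ) ≠ 0 := by exact_mod_cast (hapos j).ne'
    field_simp
  -- p^m divides N
  have hNdvd : (p : ℕ) ^ m ∣ N := by
    rw [← ZMod.natCast_eq_zero_iff]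
    rw [hN, Nat.cast_sum]
    have hstep : ∀ j ∈ s, ((∏ j' ∈ s.erase j, a j' : ℕ) : ZMod (p ^ m))
        = ((D : ℕ) : ZMod (p ^ m)) * (((x + p * j : ℕ) : ZMod (p ^ m)))⁻¹ ^ k := by
      intro j hj
      have hu : IsUnit (((x + p * j : ℕ) : ZMod (p ^ m))) := by
        rw [ZMod.isUnit_iff_coprime]; exact coprime_aux hp hpx j m
      have huk : IsUnit ((((x + p * j : ℕ) : ZMod (p ^ m)))) := hu
      have hDsplit : ((D : ℕ) : ZMod (p ^ m))
          = ((a j : ℕ) : ZMod (p ^ m)) * ((∏ j' ∈ s.erase j, a j' : ℕ) : ZMod (p ^ m)) := by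
        rw [hD, ← Nat.cast_mul, Finset.mul_prod_erase s a hj]
      rw [hDsplit, mul_assoc, mul_comm, mul_assoc]
      have : (((x + p * j : ℕ) : ZMod (p ^ m)))⁻¹ ^ k * ((a j : ℕ) : ZMod (p ^ m)) = 1 := by
        rw [ha, Nat.cast_pow, ← mul_pow, ZMod.inv_mul_of_unit _ hu, one_pow]
      rw [this, mul_one]
    rw [Finset.sum_congr rfl hstep, ← Finset.mul_sum, core p x k hp hpx m, mul_zero]
  -- conclude
  have hne : (D : ℚ) ≠ 0 := by
    rw [hD]; push_cast
    exact ne_of_gt (Finset.prod_pos (fun j _ => by exact_mod_cast hapos j))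
  set q := S p k x (p ^ r) with hq
  have hqden : (q.den : ℚ) ≠ 0 := by exact_mod_cast q.den_nz
  have hint : q.num * (D : ℤ) = (N : ℤ) * (q.den : ℤ) := by
    have : (q.num : ℚ) * (D : ℚ) = (N : ℚ) * (q.den : ℚ) := by
      rw [← Rat.num_div_den q] at hkey
      field_simp at hkey
      rw [hkey]; push_cast; ring
    exact_mod_cast this
  have hdvd1 : (p : ℤ) ^ m ∣ q.num * (D : ℤ) := by
    rw [hint]
    exact Dvd.dvd.mul_right (by exact_mod_cast hNdvd) _
  have hcop : IsCoprime ((p : ℤ) ^ m) ((D : ℤ)) := by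
    rw [← Nat.cast_pow, Nat.isCoprime_iff_coprime]
    refine Nat.Coprime.symm (Nat.Coprime.prod_left (fun j _ => ?_))
    exact Nat.Coprime.pow_left k (coprime_aux hp hpx j m)
  exact hcop.dvd_of_dvd_mul_right hdvd1
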